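/- Let G be a graph on vertices v₁, …, v_ℓ with a perfect elimination ordering (v₁, …, v_ℓ). For 1 ≤ k ≤ ℓ define C_{≥k} = {k} ∪ {i : k < i ≤ ℓ and there exists a path v_k v_{j₁} ⋯ v_{j_n} v_i in G with k < j₁ < ⋯ < j_n < i}. If s < t, {v_s, v_t} ∈ E_G, s ∉ C_{≥k} and t ∈ C_{≥k}, then {v_s, v_k} ∈ E_G and s < k. -/

import Mathlib

variable {ℓ : ℕ}

/-- `C_{≥k}`: the set containing `k` and all `i > k` reachable from `k` by a path whose
intermediate vertices have strictly increasing indices, all strictly between `k` and `i`. -/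
def Cge (G : SimpleGraph (Fin ℓ)) (k : Fin ℓ) : Set (Fin ℓ) :=
  {i | i = k ∨ (k < i ∧ ∃ l : List (Fin ℓ),
    List.Chain G.Adj k (l ++ [i]) ∧ List.Chain' (· < ·) l ∧ ∀ j ∈ l, k < j ∧ j < i)}

private lemma aux8 (G : SimpleGraph (Fin ℓ))
    (hpeo : ∀ t a b : Fin ℓ, a < t → b < t → a ≠ b → G.Adj a t → G.Adj b t → G.Adj a b)
    (k s : Fin ℓ) (hs : s ∉ Cge G k) :
    ∀ l : List (Fin ℓ), ∀ t : Fin ℓ, s < t → G.Adj s t → k < t →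
      List.Chain G.Adj k (l ++ [t]) → List.Chain' (· < ·) l →
      (∀ j ∈ l, k < j ∧ j < t) → G.Adj s k ∧ s < k := by
  intro l
  induction l using List.reverseRecOn with
  | nil =>
    intro t hst hadj hkt hch _ _
    simp only [List.nil_append, List.chain_cons, List.Chain.nil] at hch
    have hkt' : G.Adj k t := List.isChain_pair.mp hch
    have hsk : s ≠ k := by rintro rfl; exact hs (Or.inl rfl)
    have hadjsk : G.Adj s k := hpeo t s k hst hkt hsk hadj hkt'
    rcases lt_trichotomy s k with h | h | h
    · exact ⟨hadjsk, h⟩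
    · exact absurd h hsk
    · exact absurd (Or.inr ⟨h, [], List.isChain_pair.mpr hadjsk.symm, List.isChain_nil, by simp⟩) hs
  | append_singleton l' j ih =>
    intro t hst hadj hkt hch hch' hb
    rw [List.append_assoc, List.singleton_append] at hch
    unfold List.Chain at hch
    rw [List.isChain_cons_split (l₂ := [t])] at hch
    obtain ⟨hch1, hch2⟩ := hch
    have hjt : G.Adj j t := by simpa using hch2
    have hkj : k < j := (hb j (by simp)).1
    have hjlt : j < t := (hb j (by simp)).2
    have hch'' : List.Chain' (· < ·) l' := hch'.prefix ⟨[j], rfl⟩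
    have hpw := List.isChain_iff_pairwise.mp hch'
    have hmj : ∀ m ∈ l', m < j := by
      intro m hm
      exact (List.pairwise_append.mp (by simpa using hpw)).2.2 m hm j (by simp)
    have hjC : j ∈ Cge G k := Or.inr ⟨hkj, l', hch1, hch'',
      fun m hm => ⟨(hb m (by simp [hm])).1, hmj m hm⟩⟩
    have hsj : s ≠ j := by rintro rfl; exact hs hjC
    have hadjsj : G.Adj s j := hpeo t s j hst hjlt hsj hadj hjt
    have hsj' : s < j := by
      rcases lt_trichotomy s j with h | h | h
      · exact h
      · exact absurd h hsj
      · exfalso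
        apply hs
        refine Or.inr ⟨hkj.trans h, l' ++ [j], ?_, hch', ?_⟩
        · rw [List.append_assoc, List.singleton_append]
          unfold List.Chain
          rw [List.isChain_cons_split (l₂ := [s])]
          exact ⟨hch1, by simpa using hadjsj.symm⟩
        · intro m hm
          rcases List.mem_append.mp hm with hm | hm
          · exact ⟨(hb m (by simp [hm])).1, (hmj m hm).trans h⟩
          · simp at hm; subst hm; exact ⟨hkj, h⟩
    exact ih j hsj' hadjsj hkj hch1 hch'' fun m hm => ⟨(hb m (by simp [hm])).1, hmj m hm⟩

theorem stmt8 (G : SimpleGraph (Fin ℓ))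
    (hpeo : ∀ t a b : Fin ℓ, a < t → b < t → a ≠ b → G.Adj a t → G.Adj b t → G.Adj a b)
    (k s t : Fin ℓ) (hst : s < t) (hadj : G.Adj s t)
    (hs : s ∉ Cge G k) (ht : t ∈ Cge G k) :
    G.Adj s k ∧ s < k := by
  rcases ht with rfl | ⟨hkt, l, hch, hch', hb⟩
  · exact ⟨hadj, hst⟩
  · exact aux8 G hpeo k s hs l t hst hadj hkt hch hch' hb
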